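/- arXiv:2007.16169 — 2 statements merged into one kernel-verified Lean document; each statement's English description precedes it below -/
import Mathlib

section
/- Let A be the dihedral Artin group with presentation ⟨a, b | (ab)^k a^e = (ba)^k b^e⟩ encoding the relation aba··· = bab··· with m ≥ 3 alternating letters on each side (m finite). If there exists a constant N such that every element of A is a product of at most N alternating syllables a^{n_1} b^{n_2} ··· , then A/Z(A) would be a product of finitely many cyclic subgroups, contradicting that A/Z(A) is acylindrically hyperbolic. Consequently, the syllabic length function on A is unbounded. -/
open Finset

/-- The alternating word `xyxy⋯` of length `m` in the free group on `Bool`,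
starting with the generator `x`. -/
def altWord (x : Bool) (m : ℕ) : FreeGroup Bool :=
  ((List.range m).map (fun i => FreeGroup.of (if i % 2 = 0 then x else !x))).prod

/-- The defining relation `prod(a,b;m) = prod(b,a;m)` of the dihedral Artin group,
with `a = true` and `b = false`. -/
def artinRels (m : ℕ) : Set (FreeGroup Bool) :=
  {altWord true m * (altWord false m)⁻¹}

/-- The dihedral Artin group `⟨a, b | prod(a,b;m) = prod(b,a;m)⟩`. -/
abbrev DihedralArtin (m : ℕ) := PresentedGroup (artinRels m)

/-- The Garside element `Δ` of the dihedral Artin group. -/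
def garside (m : ℕ) : DihedralArtin m := PresentedGroup.mk (artinRels m) (altWord true m)

/-- The syllabic length of `g` relative to the generating pair `(a, b)`:
the least number of syllables (nonzero powers of `a` or of `b`) whose product is `g`. -/
noncomputable def sylLen {A : Type*} [Group A] (a b : A) (g : A) : ℕ :=
  sInf {n | ∃ L : List A, L.length = n ∧
    (∀ x ∈ L, (∃ k : ℤ, x = a ^ k) ∨ (∃ k : ℤ, x = b ^ k)) ∧ L.prod = g}

namespace Stmt2Aux

/-- The group of complex affine transformations `z ↦ u z + c`. -/
@[ext] structure Aff : Type where
  u : ℂˣ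
  c : ℂ

instance : Mul Aff := ⟨fun f g => ⟨f.u * g.u, (f.u : ℂ) * g.c + f.c⟩⟩
instance : One Aff := ⟨⟨1, 0⟩⟩
noncomputable instance : Inv Aff := ⟨fun f => ⟨f.u⁻¹, -((f.u⁻¹ : ℂ) * f.c)⟩⟩

@[simp] lemma mul_u (f g : Aff) : (f * g).u = f.u * g.u := rfl
@[simp] lemma mul_c (f g : Aff) : (f * g).c = (f.u : ℂ) * g.c + f.c := rfl
@[simp] lemma one_u : (1 : Aff).u = 1 := rfl
@[simp] lemma one_c : (1 : Aff).c = 0 := rfl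
@[simp] lemma inv_u (f : Aff) : f⁻¹.u = f.u⁻¹ := rfl
@[simp] lemma inv_c (f : Aff) : f⁻¹.c = -((f.u⁻¹ : ℂ) * f.c) := rfl

noncomputable instance : Group Aff where
  mul_assoc f g h := by ext <;> simp <;> ring
  one_mul f := by ext <;> simp
  mul_one f := by ext <;> simp
  inv_mul_cancel f := by ext <;> simp

lemma prod_range_map (W : ℂˣ) (d : ℕ → ℂ) (n : ℕ) :
    ((List.range n).map (fun i => Aff.mk W (d i))).prod
      = Aff.mk (W ^ n) (∑ i ∈ range n, (W : ℂ) ^ i * d i) := by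
  induction n with
  | zero => ext <;> simp
  | succ n ih =>
    rw [List.range_succ, List.map_append, List.prod_append, ih]
    ext <;> simp [pow_succ, Finset.sum_range_succ] <;> ring

lemma pow_mk (W : ℂˣ) (c : ℂ) (n : ℕ) :
    (Aff.mk W c) ^ n = Aff.mk (W ^ n) ((∑ i ∈ range n, (W : ℂ) ^ i) * c) := by
  induction n with
  | zero => ext <;> simp
  | succ n ih =>
    rw [pow_succ, ih]
    ext <;> simp [pow_succ, Finset.sum_range_succ] <;> ring

noncomputable def zeta (m : ℕ) : ℂ := Complex.exp (2 * Real.pi * Complex.I / m)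

lemma zeta_pow (m : ℕ) (hm : 3 ≤ m) : zeta m ^ m = 1 := by
  have hm0 : (m : ℂ) ≠ 0 := Nat.cast_ne_zero.mpr (by omega)
  rw [zeta, ← Complex.exp_nat_mul]
  have : (m : ℂ) * (2 * Real.pi * Complex.I / m) = 2 * Real.pi * Complex.I := by
    field_simp
  rw [this, Complex.exp_two_pi_mul_I]

lemma zeta_pow_ne_one (m : ℕ) (hm : 3 ≤ m) {j : ℕ} (hj : 0 < j) (hjm : j < m) :
    zeta m ^ j ≠ 1 := by
  intro h
  rw [zeta, ← Complex.exp_nat_mul, Complex.exp_eq_one_iff] at h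
  obtain ⟨n, hn⟩ := h
  have hm0 : (m : ℂ) ≠ 0 := Nat.cast_ne_zero.mpr (by omega)
  have h2 : (2 * (Real.pi : ℂ) * Complex.I) ≠ 0 := by
    simp [Real.pi_ne_zero, Complex.I_ne_zero]
  have h4 : (2 * (Real.pi : ℂ) * Complex.I) * (j : ℂ)
      = (2 * (Real.pi : ℂ) * Complex.I) * ((n : ℂ) * m) := by
    field_simp at hn
    linear_combination (2 * (Real.pi : ℂ) * Complex.I) * hn
  have h3 : (j : ℂ) = (n : ℂ) * m := mul_left_cancel₀ h2 h4
  have h5 : (j : ℤ) = n * m := by exact_mod_cast h3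
  have h6 : (m : ℤ) ∣ (j : ℤ) := ⟨n, by linarith [h5, mul_comm n (m:ℤ)]⟩
  have h7 : (m : ℤ) ≤ j := Int.le_of_dvd (by exact_mod_cast hj) h6
  have h8 : (j : ℤ) < m := by exact_mod_cast hjm
  linarith

noncomputable def om (m : ℕ) : ℂ := -(zeta m)

lemma om_ne_zero (m : ℕ) : om m ≠ 0 := neg_ne_zero.mpr (Complex.exp_ne_zero _)

lemma om_pow (m : ℕ) (hm : 3 ≤ m) : om m ^ m = (-1 : ℂ) ^ m := by
  rw [om, neg_pow, zeta_pow m hm, mul_one]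

lemma om_ne_one (m : ℕ) (hm : 3 ≤ m) : om m ≠ 1 := by
  intro h
  have h2 : zeta m ^ 2 = 1 := by
    have : zeta m = -1 := by rw [← neg_neg (zeta m), ← om, h]
    rw [this]; ring
  exact zeta_pow_ne_one m hm (by norm_num) (by omega) h2

lemma om_ne_neg_one (m : ℕ) (hm : 3 ≤ m) : om m ≠ -1 := by
  intro h
  have h2 : zeta m ^ 1 = 1 := by
    have : zeta m = 1 := by
      have := congrArg Neg.neg h
      simpa [om] using this
    rw [this]; ring
  exact zeta_pow_ne_one m hm (by norm_num) (by omega) h2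

lemma om_pow_two_mul (m : ℕ) (hm : 3 ≤ m) : om m ^ (2 * m) = 1 := by
  rw [mul_comm, pow_mul, om_pow m hm, ← pow_mul, mul_comm, pow_mul]
  norm_num

noncomputable def W (m : ℕ) : ℂˣ := Units.mk0 (om m) (om_ne_zero m)

@[simp] lemma W_val (m : ℕ) : ((W m : ℂˣ) : ℂ) = om m := rfl

noncomputable def s (m : ℕ) : Aff := ⟨W m, 0⟩
noncomputable def t (m : ℕ) : Aff := ⟨W m, 1⟩

lemma W_pow_two_mul (m : ℕ) (hm : 3 ≤ m) : W m ^ (2 * m) = 1 := by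
  apply Units.ext
  simpa using om_pow_two_mul m hm

lemma s_pow_two_mul (m : ℕ) (hm : 3 ≤ m) : s m ^ (2 * m) = 1 := by
  rw [s, pow_mk]
  ext
  · simpa using om_pow_two_mul m hm
  · simp

lemma t_pow_two_mul (m : ℕ) (hm : 3 ≤ m) : t m ^ (2 * m) = 1 := by
  rw [t, pow_mk]
  ext
  · simpa using om_pow_two_mul m hm
  · simp only [mul_one, W_val, one_c]
    rw [geom_sum_eq (om_ne_one m hm), om_pow_two_mul m hm]
    simp

lemma s_mul_t_inv (m : ℕ) : s m * (t m)⁻¹ = Aff.mk 1 (-1) := by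
  ext
  · simp [s, t]
  · simp [s, t]
    exact mul_inv_cancel₀ (om_ne_zero m)

lemma translation_pow (j : ℕ) : (Aff.mk 1 (-1 : ℂ)) ^ j = Aff.mk 1 (-(j : ℂ)) := by
  rw [pow_mk]
  ext
  · simp
  · simp

lemma geom_alt_sum (m : ℕ) (hm : 3 ≤ m) :
    ∑ i ∈ range m, (-(om m)) ^ i = 0 := by
  have hne : (-(om m)) ≠ 1 := by
    intro h
    exact om_ne_neg_one m hm (by rw [← neg_neg (om m), h])
  rw [geom_sum_eq hne]
  have : (-(om m)) ^ m = 1 := by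
    rw [neg_pow, om_pow m hm, ← mul_pow]
    norm_num
  rw [this]
  simp

lemma altprod_eq (m : ℕ) (hm : 3 ≤ m) :
    ((List.range m).map (fun i => if i % 2 = 0 then s m else t m)).prod =
    ((List.range m).map (fun i => if i % 2 = 0 then t m else s m)).prod := by
  have h1 : (fun i : ℕ => if i % 2 = 0 then s m else t m)
      = fun i => Aff.mk (W m) (if i % 2 = 0 then 0 else 1) := by
    funext i; split_ifs <;> rfl
  have h2 : (fun i : ℕ => if i % 2 = 0 then t m else s m)
      = fun i => Aff.mk (W m) (if i % 2 = 0 then 1 else 0) := by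
    funext i; split_ifs <;> rfl
  rw [h1, h2, prod_range_map, prod_range_map]
  have key : ∑ i ∈ range m, ((W m : ℂ)) ^ i * (if i % 2 = 0 then (1:ℂ) else 0)
      - ∑ i ∈ range m, ((W m : ℂ)) ^ i * (if i % 2 = 0 then (0:ℂ) else 1)
      = ∑ i ∈ range m, (-(om m)) ^ i := by
    rw [← Finset.sum_sub_distrib]
    apply Finset.sum_congr rfl
    intro i _
    rcases Nat.even_or_odd i with h | h
    · rw [if_pos (Nat.even_iff.mp h), if_pos (Nat.even_iff.mp h), h.neg_pow]
      simp
    · have h2' : ¬ (i % 2 = 0) := by rw [Nat.odd_iff] at h; omega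
      rw [if_neg h2', if_neg h2', h.neg_pow]
      simp
  have hsum : ∑ i ∈ range m, ((W m : ℂ)) ^ i * (if i % 2 = 0 then (0:ℂ) else 1)
      = ∑ i ∈ range m, ((W m : ℂ)) ^ i * (if i % 2 = 0 then (1:ℂ) else 0) := by
    have := key
    rw [geom_alt_sum m hm] at this
    exact (sub_eq_zero.mp this).symm
  rw [hsum]

lemma lift_altWord (m : ℕ) (f : Bool → Aff) (x : Bool) :
    FreeGroup.lift f (altWord x m)
      = ((List.range m).map (fun i => f (if i % 2 = 0 then x else !x))).prod := by
  rw [altWord, map_list_prod, List.map_map]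
  refine congrArg List.prod (List.map_congr_left fun i _ => ?_)
  simp [Function.comp, FreeGroup.lift_apply_of]

noncomputable def phi (m : ℕ) (hm : 3 ≤ m) : DihedralArtin m →* Aff :=
  PresentedGroup.toGroup (f := fun x : Bool => if x then s m else t m) (by
    intro r hr
    rw [artinRels, Set.mem_singleton_iff] at hr
    subst hr
    rw [map_mul, map_inv, mul_inv_eq_one, lift_altWord, lift_altWord]
    have e1 : (fun i : ℕ => (fun x : Bool => if x then s m else t m)
        (if i % 2 = 0 then true else !true))
        = fun i : ℕ => if i % 2 = 0 then s m else t m := by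
      funext i; by_cases h : i % 2 = 0 <;> simp [h]
    have e2 : (fun i : ℕ => (fun x : Bool => if x then s m else t m)
        (if i % 2 = 0 then false else !false))
        = fun i : ℕ => if i % 2 = 0 then t m else s m := by
      funext i; by_cases h : i % 2 = 0 <;> simp [h]
    rw [e1, e2]
    exact altprod_eq m hm)

lemma phi_a (m : ℕ) (hm : 3 ≤ m) : phi m hm (PresentedGroup.of true) = s m := by
  rw [phi, PresentedGroup.toGroup.of]
  simp

lemma phi_b (m : ℕ) (hm : 3 ≤ m) : phi m hm (PresentedGroup.of false) = t m := by
  rw [phi, PresentedGroup.toGroup.of]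
  simp

/-- The set of products of lists of bounded length with entries in a finite set is finite. -/
lemma finite_prodSet {G : Type*} [Monoid G] {K : Set G} (hK : K.Finite) :
    ∀ N : ℕ, {x : G | ∃ L : List G, L.length ≤ N ∧ (∀ y ∈ L, y ∈ K) ∧ L.prod = x}.Finite := by
  intro N
  induction N with
  | zero =>
    apply Set.Finite.subset (Set.finite_singleton 1)
    rintro x ⟨L, hL, -, rfl⟩
    rw [Nat.le_zero, List.length_eq_zero_iff] at hL
    simp [hL]
  | succ n ih =>
    apply Set.Finite.subset ((Set.finite_singleton 1).union (hK.image2 (· * ·) ih))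
    rintro x ⟨L, hL, hmem, rfl⟩
    cases L with
    | nil => left; simp
    | cons y L' =>
      right
      refine Set.mem_image2_of_mem (hmem y (by simp)) ?_
      exact ⟨L', by simpa using hL, fun z hz => hmem z (by simp [hz]), rfl⟩

lemma pow_list {A : Type*} [Group A] (a b : A) (j : ℕ) :
    ∃ L : List A, L.length = 2 * j ∧
      (∀ x ∈ L, (∃ k : ℤ, x = a ^ k) ∨ (∃ k : ℤ, x = b ^ k)) ∧
      L.prod = (a * b⁻¹) ^ j := by
  induction j with
  | zero => exact ⟨[], rfl, by simp, by simp⟩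
  | succ j ih =>
    obtain ⟨L, hlen, hmem, hprod⟩ := ih
    refine ⟨a :: b⁻¹ :: L, by simp [hlen]; ring, ?_, ?_⟩
    · intro x hx
      simp only [List.mem_cons] at hx
      rcases hx with rfl | rfl | h
      · exact Or.inl ⟨1, by simp⟩
      · exact Or.inr ⟨-1, by simp⟩
      · exact hmem x h
    · rw [List.prod_cons, List.prod_cons, hprod, ← mul_assoc, pow_succ']

end Stmt2Aux

/-- in a dihedral Artin group with coefficient `m ≥ 3`,
the syllabic length function is unbounded: `A` is not a bounded product of
alternating cyclic subgroups. -/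
theorem stmt2 (m : ℕ) (hm : 3 ≤ m) :
    ∀ N : ℕ, ∃ g : DihedralArtin m,
      N < sylLen (PresentedGroup.of true) (PresentedGroup.of false) g := by
  intro N
  classical
  set a : DihedralArtin m := PresentedGroup.of true with ha
  set b : DihedralArtin m := PresentedGroup.of false with hb
  set φ : DihedralArtin m →* Stmt2Aux.Aff := Stmt2Aux.phi m hm with hφ
  have φa : φ a = Stmt2Aux.s m := Stmt2Aux.phi_a m hm
  have φb : φ b = Stmt2Aux.t m := Stmt2Aux.phi_b m hm
  -- a finite set containing all syllable images
  set K : Set Stmt2Aux.Aff :=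
    (Subgroup.zpowers (Stmt2Aux.s m) : Set Stmt2Aux.Aff) ∪
      (Subgroup.zpowers (Stmt2Aux.t m) : Set Stmt2Aux.Aff) with hKdef
  have hsfin : IsOfFinOrder (Stmt2Aux.s m) :=
    isOfFinOrder_iff_pow_eq_one.mpr ⟨2 * m, by omega, Stmt2Aux.s_pow_two_mul m hm⟩
  have htfin : IsOfFinOrder (Stmt2Aux.t m) :=
    isOfFinOrder_iff_pow_eq_one.mpr ⟨2 * m, by omega, Stmt2Aux.t_pow_two_mul m hm⟩
  have hK : K.Finite := hsfin.finite_zpowers.union htfin.finite_zpowers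
  set T : Set Stmt2Aux.Aff :=
    {x | ∃ L : List Stmt2Aux.Aff, L.length ≤ N ∧ (∀ y ∈ L, y ∈ K) ∧ L.prod = x} with hTdef
  have hT : T.Finite := Stmt2Aux.finite_prodSet hK N
  -- find a translation not in T
  have hinj : Function.Injective (fun j : ℕ => Stmt2Aux.Aff.mk 1 (-(j : ℂ))) := by
    intro x y hxy
    have : -(x : ℂ) = -(y : ℂ) := congrArg Stmt2Aux.Aff.c hxy
    exact_mod_cast neg_injective this
  obtain ⟨j, hj⟩ : ∃ j : ℕ, Stmt2Aux.Aff.mk 1 (-(j : ℂ)) ∉ T := by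
    by_contra h
    push_neg at h
    exact hT.not_infinite (Set.infinite_of_injective_forall_mem hinj h)
  refine ⟨(a * b⁻¹) ^ j, ?_⟩
  have himg : φ ((a * b⁻¹) ^ j) = Stmt2Aux.Aff.mk 1 (-(j : ℂ)) := by
    rw [map_pow, map_mul, map_inv, φa, φb, Stmt2Aux.s_mul_t_inv, Stmt2Aux.translation_pow]
  set S : Set ℕ := {n | ∃ L : List (DihedralArtin m), L.length = n ∧
    (∀ x ∈ L, (∃ k : ℤ, x = a ^ k) ∨ (∃ k : ℤ, x = b ^ k)) ∧ L.prod = (a * b⁻¹) ^ j} with hSdef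
  have hSne : S.Nonempty := by
    obtain ⟨L0, h1, h2, h3⟩ := Stmt2Aux.pow_list a b j
    exact ⟨2 * j, L0, h1, h2, h3⟩
  have hmemS : sInf S ∈ S := Nat.sInf_mem hSne
  show N < sInf S
  by_contra hle
  push_neg at hle
  apply hj
  obtain ⟨L, hlen, hmemL, hprod⟩ := hmemS
  refine ⟨L.map φ, by simpa [hlen] using hle, ?_, ?_⟩
  · intro y hy
    obtain ⟨x, hxL, rfl⟩ := List.mem_map.mp hy
    rcases hmemL x hxL with ⟨k, rfl⟩ | ⟨k, rfl⟩
    · left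
      rw [map_zpow, φa]
      exact Subgroup.zpow_mem_zpowers _ k
    · right
      rw [map_zpow, φb]
      exact Subgroup.zpow_mem_zpowers _ k
  · rw [← map_list_prod, hprod, himg]
end

section
/- In the dihedral Artin group A with coefficient m ≥ 3 and Garside element Δ, the syllabic length of Δ^n satisfies ℓ_S(Δ^n) ≥ (m−2)·|n| for every integer n. In particular, ℓ_S(Δ^n) grows linearly in n. -/
namespace Stmt11Aux



/-- The subgroup of monotone permutations of `ℚ` (order automorphisms). -/
def MonoPerm : Subgroup (Equiv.Perm ℚ) where
  carrier := {f | Monotone f}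
  mul_mem' := by
    intro f g hf hg x y hxy
    simpa using hf (hg hxy)
  one_mem' := by intro x y h; simpa using h
  inv_mem' := by
    intro f hf x y hxy
    by_contra hlt
    push_neg at hlt
    have h2 : f (f⁻¹ y) ≤ f (f⁻¹ x) := hf (le_of_lt hlt)
    simp only [Equiv.Perm.coe_inv, Equiv.apply_symm_apply] at h2
    have : x = y := le_antisymm hxy h2
    subst this
    exact lt_irrefl _ hlt

/-- Application of an element of `MonoPerm`. -/
def ap (f : MonoPerm) (x : ℚ) : ℚ := (f : Equiv.Perm ℚ) x

@[simp] lemma ap_one (x : ℚ) : ap 1 x = x := rfl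

lemma ap_mul (f g : MonoPerm) (x : ℚ) : ap (f * g) x = ap f (ap g x) := rfl

lemma ap_mono (f : MonoPerm) : Monotone (ap f) := f.2

lemma ap_inj (f : MonoPerm) {x y : ℚ} (h : ap f x = ap f y) : x = y :=
  (f : Equiv.Perm ℚ).injective h

lemma ap_inv_eq (f : MonoPerm) {x y : ℚ} (h : ap f y = x) : ap f⁻¹ x = y := by
  subst h; exact (f : Equiv.Perm ℚ).symm_apply_apply y

/-- Translation by `c` as a monotone permutation. -/
def Tr (c : ℚ) : MonoPerm :=
  ⟨Equiv.addRight c, by intro x y h; simpa using h⟩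

@[simp] lemma ap_Tr (c x : ℚ) : ap (Tr c) x = x + c := rfl

lemma mp_ext {f g : MonoPerm} (h : ∀ x, ap f x = ap g x) : f = g := by
  apply Subtype.ext
  exact Equiv.ext h

lemma Tr_mul (c d : ℚ) : Tr c * Tr d = Tr (d + c) := by
  apply mp_ext
  intro x
  rw [ap_mul]
  simp [add_assoc]

lemma Tr_zero : Tr 0 = 1 := by
  apply mp_ext
  intro x
  simp

lemma Tr_inv (c : ℚ) : (Tr c)⁻¹ = Tr (-c) := by
  rw [inv_eq_iff_mul_eq_one, Tr_mul]
  simp [Tr_zero]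





section Phi

variable (l : ℚ)

/-- The ramp function on `[0,2)`: slope `l` on `[0,1]`, slope `2-l` on `[1,2]`. -/
def ramp (u : ℚ) : ℚ := if u ≤ 1 then l * u else l + (2 - l) * (u - 1)

/-- Inverse ramp. -/
def pmar (v : ℚ) : ℚ := if v ≤ l then v / l else 1 + (v - l) / (2 - l)

variable (hl0 : 0 < l) (hl2 : l < 2)

include hl0 hl2 in
lemma ramp_mem {u : ℚ} (h0 : 0 ≤ u) (h2 : u < 2) : 0 ≤ ramp l u ∧ ramp l u < 2 := by
  unfold ramp
  split_ifs with h
  · constructor <;> nlinarith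
  · push_neg at h
    constructor <;> nlinarith

include hl0 hl2 in
lemma pmar_ramp {u : ℚ} (h0 : 0 ≤ u) (h2 : u < 2) : pmar l (ramp l u) = u := by
  unfold ramp pmar
  split_ifs with h h1 h2'
  · field_simp
  · exfalso; nlinarith
  · exfalso
    push_neg at h
    nlinarith
  · push_neg at h
    have hne : (2:ℚ) - l ≠ 0 := by linarith
    field_simp
    ring

include hl0 hl2 in
lemma pmar_mem {v : ℚ} (h0 : 0 ≤ v) (h2 : v < 2) : 0 ≤ pmar l v ∧ pmar l v < 2 := by
  unfold pmar
  split_ifs with h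
  · constructor
    · positivity
    · rw [div_lt_iff₀ hl0]; nlinarith
  · push_neg at h
    constructor
    · have : 0 ≤ (v - l) / (2 - l) := by
        apply div_nonneg <;> nlinarith
      linarith
    · have : (v - l) / (2 - l) < 1 := by
        rw [div_lt_one (by linarith)]; nlinarith
      linarith

include hl0 hl2 in
lemma ramp_pmar {v : ℚ} (h0 : 0 ≤ v) (h2 : v < 2) : ramp l (pmar l v) = v := by
  unfold ramp pmar
  split_ifs with h h1 h2'
  · field_simp
  · exfalso
    rw [div_le_one hl0] at h1
    push_neg at h1
    nlinarith
  · exfalso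
    push_neg at h
    have hpos : 0 < (v - l) / (2 - l) := by
      apply div_pos <;> linarith
    linarith
  · push_neg at h
    have hne : (2:ℚ) - l ≠ 0 := by linarith
    field_simp
    ring

include hl0 hl2 in
lemma ramp_strictMono {u u' : ℚ} (h0 : 0 ≤ u) (hlt : u < u') : ramp l u < ramp l u' := by
  unfold ramp
  split_ifs with h h'
  · nlinarith
  · push_neg at h'
    have h1 : 0 < (2 - l) * (u' - 1) := by
      apply mul_pos <;> linarith
    nlinarith
  · exfalso; push_neg at h; linarith
  · push_neg at h
    have h1 : (2 - l) * (u - 1) < (2 - l) * (u' - 1) := by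
      apply mul_lt_mul_of_pos_left (by linarith) (by linarith)
    nlinarith

/-- Fractional part relative to period 2. -/
def fr2 (x : ℚ) : ℚ := x - 2 * ⌊x / 2⌋

lemma fr2_nonneg (x : ℚ) : 0 ≤ fr2 x := by
  have := Int.floor_le (x / 2)
  unfold fr2
  linarith

lemma fr2_lt_two (x : ℚ) : fr2 x < 2 := by
  have := Int.lt_floor_add_one (x / 2)
  unfold fr2
  linarith

lemma floor_eq_of_base {k : ℤ} {t : ℚ} (h0 : 0 ≤ t) (h2 : t < 2) :
    ⌊((2 * k : ℚ) + t) / 2⌋ = k := by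
  rw [Int.floor_eq_iff]
  constructor
  · push_cast; linarith
  · push_cast; linarith

/-- The piecewise-linear map `φ_l`. -/
def phiFun (x : ℚ) : ℚ := 2 * ⌊x / 2⌋ + ramp l (fr2 x)

/-- Its inverse. -/
def phiInvFun (y : ℚ) : ℚ := 2 * ⌊y / 2⌋ + pmar l (fr2 y)

lemma fr2_decomp (x : ℚ) : x = 2 * ⌊x / 2⌋ + fr2 x := by unfold fr2; ring

include hl0 hl2 in
lemma floor_phiFun (x : ℚ) : ⌊phiFun l x / 2⌋ = ⌊x / 2⌋ := by
  obtain ⟨h0, h2⟩ := ramp_mem l hl0 hl2 (fr2_nonneg x) (fr2_lt_two x)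
  unfold phiFun
  exact floor_eq_of_base h0 h2

include hl0 hl2 in
lemma fr2_phiFun (x : ℚ) : fr2 (phiFun l x) = ramp l (fr2 x) := by
  have h := floor_phiFun l hl0 hl2 x
  have h1 : fr2 (phiFun l x) = phiFun l x - 2 * (⌊phiFun l x / 2⌋ : ℚ) := rfl
  rw [h1, h]
  unfold phiFun
  ring

include hl0 hl2 in
lemma phiInv_phi (x : ℚ) : phiInvFun l (phiFun l x) = x := by
  unfold phiInvFun
  rw [floor_phiFun l hl0 hl2, fr2_phiFun l hl0 hl2,
    pmar_ramp l hl0 hl2 (fr2_nonneg x) (fr2_lt_two x)]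
  exact (fr2_decomp x).symm

include hl0 hl2 in
lemma floor_phiInvFun (y : ℚ) : ⌊phiInvFun l y / 2⌋ = ⌊y / 2⌋ := by
  obtain ⟨h0, h2⟩ := pmar_mem l hl0 hl2 (fr2_nonneg y) (fr2_lt_two y)
  unfold phiInvFun
  exact floor_eq_of_base h0 h2

include hl0 hl2 in
lemma fr2_phiInvFun (y : ℚ) : fr2 (phiInvFun l y) = pmar l (fr2 y) := by
  have h := floor_phiInvFun l hl0 hl2 y
  have h1 : fr2 (phiInvFun l y) = phiInvFun l y - 2 * (⌊phiInvFun l y / 2⌋ : ℚ) := rfl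
  rw [h1, h]
  unfold phiInvFun
  ring

include hl0 hl2 in
lemma phi_phiInv (y : ℚ) : phiFun l (phiInvFun l y) = y := by
  unfold phiFun
  rw [floor_phiInvFun l hl0 hl2, fr2_phiInvFun l hl0 hl2,
    ramp_pmar l hl0 hl2 (fr2_nonneg y) (fr2_lt_two y)]
  exact (fr2_decomp y).symm

include hl0 hl2 in
lemma phiFun_lb (x : ℚ) : (2 * ⌊x / 2⌋ : ℚ) ≤ phiFun l x := by
  obtain ⟨h0, _⟩ := ramp_mem l hl0 hl2 (fr2_nonneg x) (fr2_lt_two x)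
  unfold phiFun; linarith

include hl0 hl2 in
lemma phiFun_ub (x : ℚ) : phiFun l x < 2 * ⌊x / 2⌋ + 2 := by
  obtain ⟨_, h2⟩ := ramp_mem l hl0 hl2 (fr2_nonneg x) (fr2_lt_two x)
  unfold phiFun; linarith

include hl0 hl2 in
lemma phiFun_strictMono : StrictMono (phiFun l) := by
  intro x y hxy
  rcases lt_or_eq_of_le (Int.floor_le_floor (a := x/2) (b := y/2) (by linarith)) with h | h
  · calc phiFun l x < 2 * ⌊x / 2⌋ + 2 := phiFun_ub l hl0 hl2 x
      _ ≤ 2 * ⌊y / 2⌋ := by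
          have : (⌊x/2⌋ : ℚ) + 1 ≤ (⌊y/2⌋ : ℚ) := by exact_mod_cast Int.add_one_le_of_lt h
          linarith
      _ ≤ phiFun l y := phiFun_lb l hl0 hl2 y
  · unfold phiFun
    rw [h]
    have hfr : fr2 x < fr2 y := by
      unfold fr2
      rw [h]
      linarith
    have := ramp_strictMono l hl0 hl2 (fr2_nonneg x) hfr
    linarith

include hl0 hl2 in
lemma phiFun_mono : Monotone (phiFun l) := (phiFun_strictMono l hl0 hl2).monotone

/-- `φ_l` as a monotone permutation. -/
noncomputable def Phi : ℚ ≃ ℚ :=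
  { toFun := phiFun l
    invFun := phiInvFun l
    left_inv := fun x => phiInv_phi l hl0 hl2 x
    right_inv := fun y => phi_phiInv l hl0 hl2 y }

-- pin values
include hl0 hl2 in
lemma phiFun_even (j : ℤ) : phiFun l (2 * j) = 2 * j := by
  have hf : ⌊(2 * j : ℚ) / 2⌋ = j := by
    rw [show ((2 * j : ℚ)) = (2 * (j:ℚ) + 0) by ring]
    exact floor_eq_of_base (le_refl 0) (by norm_num)
  unfold phiFun fr2
  rw [hf]
  rw [show (2 * (j:ℚ) - 2 * (j:ℚ)) = 0 by ring]
  unfold ramp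
  simp

include hl0 hl2 in
lemma phiFun_odd (j : ℤ) : phiFun l (2 * j + 1) = 2 * j + l := by
  have hf : ⌊(2 * j + 1 : ℚ) / 2⌋ = j := by
    rw [show ((2 * j + 1 : ℚ)) = (2 * (j:ℚ) + 1) by push_cast; ring]
    exact floor_eq_of_base (by norm_num) (by norm_num)
  unfold phiFun fr2
  rw [hf]
  rw [show (2 * (j:ℚ) + 1 - 2 * (j:ℚ)) = 1 by ring]
  unfold ramp
  simp

include hl0 hl2 in
lemma phiFun_period (x : ℚ) (j : ℤ) : phiFun l (x + 2 * j) = phiFun l x + 2 * j := by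
  have hf : ⌊(x + 2 * j) / 2⌋ = ⌊x / 2⌋ + j := by
    rw [show ((x + 2 * j) / 2) = x / 2 + j by push_cast; ring]
    exact Int.floor_add_intCast _ _
  have hfr : fr2 (x + 2 * j) = fr2 x := by
    unfold fr2
    rw [hf]
    push_cast
    ring
  unfold phiFun
  rw [hf, hfr]
  push_cast
  ring

end Phi



section AltP

variable {G : Type*} [Monoid G]

/-- The alternating product `a b a b ⋯` with `n` factors. -/
def altP (a b : G) : ℕ → G
  | 0 => 1
  | n+1 => altP a b n * (if n % 2 = 0 then a else b)

lemma altP_even (a b : G) (q : ℕ) : altP a b (2*q) = (a*b)^q := by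
  induction q with
  | zero => simp [altP]
  | succ q ih =>
      have h1 : 2*(q+1) = (2*q+1) + 1 := by ring
      rw [h1]
      show altP a b (2*q+1) * (if (2*q+1) % 2 = 0 then a else b) = (a*b)^(q+1)
      have h2 : (2*q+1) % 2 = 1 := by omega
      rw [h2]
      show altP a b (2*q+1) * b = (a*b)^(q+1)
      show altP a b (2*q) * (if (2*q) % 2 = 0 then a else b) * b = (a*b)^(q+1)
      have h3 : (2*q) % 2 = 0 := by omega
      rw [h3, ih]
      simp [pow_succ, mul_assoc]

lemma altP_odd (a b : G) (r : ℕ) : altP a b (2*r+1) = (a*b)^r * a := by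
  show altP a b (2*r) * (if (2*r) % 2 = 0 then a else b) = (a*b)^r * a
  have h3 : (2*r) % 2 = 0 := by omega
  rw [h3, altP_even]
  simp

end AltP

section Construction

variable (l : ℚ) (hl0 : 0 < l) (hl2 : l < 2)

/-- `φ_l` as a monotone permutation of `ℚ`. -/
noncomputable def PhiP : MonoPerm := ⟨Phi l hl0 hl2, phiFun_mono l hl0 hl2⟩

lemma ap_PhiP (x : ℚ) : ap (PhiP l hl0 hl2) x = phiFun l x := rfl

lemma ap_PhiP_inv {x y : ℚ} (h : phiFun l y = x) : ap (PhiP l hl0 hl2)⁻¹ x = y :=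
  ap_inv_eq _ h

lemma PhiP_Tr_comm (j : ℤ) :
    PhiP l hl0 hl2 * Tr (2*(j:ℚ)) = Tr (2*(j:ℚ)) * PhiP l hl0 hl2 := by
  apply mp_ext
  intro x
  rw [ap_mul, ap_mul, ap_Tr, ap_Tr, ap_PhiP, ap_PhiP]
  exact phiFun_period l hl0 hl2 x j

lemma commute_Tr_PhiP (j : ℤ) : Commute (Tr (2*(j:ℚ))) (PhiP l hl0 hl2) :=
  (PhiP_Tr_comm l hl0 hl2 j).symm

/-- Conjugated translation `φ⁻¹ ∘ (x+c) ∘ φ`. -/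
noncomputable def W (c : ℚ) : MonoPerm :=
  (PhiP l hl0 hl2)⁻¹ * Tr c * PhiP l hl0 hl2

lemma W_mul (c d : ℚ) : W l hl0 hl2 c * W l hl0 hl2 d = W l hl0 hl2 (d + c) := by
  unfold W
  rw [← Tr_mul]
  group

lemma W_even (j : ℤ) : W l hl0 hl2 (2*(j:ℚ)) = Tr (2*(j:ℚ)) := by
  unfold W
  rw [mul_assoc, ← PhiP_Tr_comm l hl0 hl2 j]
  group

lemma commute_Tr_W (j : ℤ) (c : ℚ) : Commute (Tr (2*(j:ℚ))) (W l hl0 hl2 c) := by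
  unfold W
  have h1 := commute_Tr_PhiP l hl0 hl2 j
  have h2 : Commute (Tr (2*(j:ℚ))) (Tr c) := by
    unfold Commute SemiconjBy
    rw [Tr_mul, Tr_mul]
    ring_nf
  exact (h1.inv_right.mul_right h2).mul_right h1

lemma W_pow (c : ℚ) (k : ℕ) : (W l hl0 hl2 c)^k = W l hl0 hl2 (k*c) := by
  induction k with
  | zero =>
      simp only [pow_zero, Nat.cast_zero, zero_mul]
      unfold W
      rw [Tr_zero]
      group
  | succ k ih =>
      rw [pow_succ, ih, W_mul]
      congr 1
      push_cast
      ring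

lemma Tr_pow (c : ℚ) (k : ℕ) : (Tr c)^k = Tr (k*c) := by
  induction k with
  | zero => simp [Tr_zero]
  | succ k ih =>
      rw [pow_succ, ih, Tr_mul]
      congr 1
      push_cast
      ring

/-- The core computation: `(W(2β)·T(−2α))^r · (W(β)·T(−α)) = T(mβ − mα)` when
`2α` and `mβ` are even integers. -/
lemma core_chain (r : ℕ) (alpha beta : ℚ) (a : ℤ) (ha : alpha = (a:ℚ))
    (jm : ℤ) (hjm : (2*r+1 : ℚ) * beta = 2*(jm:ℚ)) :
    (W l hl0 hl2 (2*beta) * Tr (-(2*alpha)))^r * (W l hl0 hl2 beta * Tr (-alpha))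
      = Tr ((2*r+1) * beta - (2*r+1) * alpha) := by
  have hcomm : Commute (W l hl0 hl2 (2*beta)) (Tr (-(2*alpha))) := by
    have := commute_Tr_W l hl0 hl2 (-a) (2*beta)
    have harg : 2*((-a : ℤ):ℚ) = -(2*alpha) := by rw [ha]; push_cast; ring
    rw [harg] at this
    exact this.symm
  rw [hcomm.mul_pow, W_pow, Tr_pow]
  have hc2 : Commute (Tr ((r:ℚ) * -(2*alpha))) (W l hl0 hl2 beta) := by
    have := commute_Tr_W l hl0 hl2 (-(r*a)) beta
    have harg : 2*((-(r*a) : ℤ):ℚ) = (r:ℚ) * -(2*alpha) := by rw [ha]; push_cast; ring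
    rw [harg] at this
    exact this
  calc (W l hl0 hl2 ((r:ℚ)*(2*beta)) * Tr ((r:ℚ) * -(2*alpha))) * (W l hl0 hl2 beta * Tr (-alpha))
      = W l hl0 hl2 ((r:ℚ)*(2*beta)) * (Tr ((r:ℚ) * -(2*alpha)) * W l hl0 hl2 beta) * Tr (-alpha) := by
        group
    _ = W l hl0 hl2 ((r:ℚ)*(2*beta)) * (W l hl0 hl2 beta * Tr ((r:ℚ) * -(2*alpha))) * Tr (-alpha) := by
        rw [hc2]
    _ = (W l hl0 hl2 ((r:ℚ)*(2*beta)) * W l hl0 hl2 beta) * (Tr ((r:ℚ) * -(2*alpha)) * Tr (-alpha)) := by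
        group
    _ = W l hl0 hl2 (beta + (r:ℚ)*(2*beta)) * Tr (-alpha + (r:ℚ) * -(2*alpha)) := by
        rw [W_mul, Tr_mul]
    _ = Tr (2*(jm:ℚ)) * Tr (-alpha + (r:ℚ) * -(2*alpha)) := by
        rw [show (beta + (r:ℚ)*(2*beta)) = (2*r+1 : ℚ) * beta by push_cast; ring, hjm,
          W_even]
    _ = Tr ((2*r+1) * beta - (2*r+1) * alpha) := by
        rw [Tr_mul, ← hjm]
        congr 1
        push_cast
        ring

end Construction

section GoodPair

lemma altP_map {G H : Type*} [Monoid G] [Monoid H] (f : G →* H) (a b : G) (n : ℕ) :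
    altP (f a) (f b) n = f (altP a b n) := by
  induction n with
  | zero => simp [altP]
  | succ n ih =>
      show altP (f a) (f b) n * (if n % 2 = 0 then f a else f b)
        = f (altP a b n * (if n % 2 = 0 then a else b))
      rw [map_mul, ih, apply_ite f]

lemma altP_conj {G : Type*} [Group G] (c x y : G) (n : ℕ) :
    altP (c*x*c⁻¹) (c*y*c⁻¹) n = c * altP x y n * c⁻¹ := by
  induction n with
  | zero => simp [altP]
  | succ n ih =>
      show altP (c*x*c⁻¹) (c*y*c⁻¹) n * (if n % 2 = 0 then c*x*c⁻¹ else c*y*c⁻¹) = _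
      rw [ih]
      show _ = c * (altP x y n * (if n % 2 = 0 then x else y)) * c⁻¹
      split_ifs <;> group

/-- Existence of a good pair of monotone permutations realizing the dihedral
Artin relation, with `a` fixing even integers, `b` fixing odd integers, and
`Δ` acting as translation by `m - 2`. -/
lemma exists_good (m : ℕ) (hm : 3 ≤ m) :
    ∃ A B : MonoPerm,
      (∀ j : ℤ, ap A (2*(j:ℚ)) = 2*(j:ℚ)) ∧
      (∀ j : ℤ, ap B (2*(j:ℚ)+1) = 2*(j:ℚ)+1) ∧
      altP A B m = Tr ((m:ℚ) - 2) ∧ altP B A m = Tr ((m:ℚ) - 2) := by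
  have hmpos : (0:ℚ) < m := by exact_mod_cast Nat.lt_of_lt_of_le (by norm_num) hm
  have hm0 : (m:ℚ) ≠ 0 := ne_of_gt hmpos
  set l : ℚ := 2 / m with hl_def
  have hl0 : 0 < l := by positivity
  have hl2 : l < 2 := by
    rw [hl_def, div_lt_iff₀ hmpos]
    have : (3:ℚ) ≤ m := by exact_mod_cast hm
    nlinarith
  rcases Nat.even_or_odd m with he | ho
  · -- even case, m = 2q
    obtain ⟨q, hq⟩ := he
    have hq2 : 2 ≤ q := by omega
    have hq0 : (q:ℚ) ≠ 0 := by
      have : (0:ℚ) < q := by exact_mod_cast Nat.lt_of_lt_of_le (by norm_num) hq2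
      linarith
    have hmQ : (m:ℚ) = 2*(q:ℚ) := by rw [hq]; push_cast; ring
    have hql : (q:ℚ) * l = 1 := by
      rw [hl_def, hmQ]
      field_simp
    set bp : ℚ := 2 - l with hbp
    set ga : ℚ := 2 - 2*l with hga
    set A : MonoPerm := W l hl0 hl2 bp * Tr (-1) with hA_def
    set B : MonoPerm := Tr 1 * W l hl0 hl2 (ga - bp) with hB_def
    have hWodd : ∀ (c : ℚ) (i k : ℤ), (2*(i:ℚ) + l + c = 2*(k:ℚ)) →
        ap (W l hl0 hl2 c) (2*(i:ℚ)+1) = 2*(k:ℚ) := by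
      intro c i k hk
      show ap ((PhiP l hl0 hl2)⁻¹ * Tr c * PhiP l hl0 hl2) _ = _
      rw [ap_mul, ap_mul, ap_PhiP, ap_Tr, phiFun_odd l hl0 hl2 i, hk]
      exact ap_PhiP_inv l hl0 hl2 (phiFun_even l hl0 hl2 k)
    have hA : ∀ j : ℤ, ap A (2*(j:ℚ)) = 2*(j:ℚ) := by
      intro j
      rw [hA_def, ap_mul, ap_Tr]
      have h1 : 2*(j:ℚ) + -1 = 2*((j-1 : ℤ):ℚ) + 1 := by push_cast; ring
      rw [h1, hWodd bp (j-1) j (by rw [hbp]; push_cast; ring)]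
    have hB : ∀ j : ℤ, ap B (2*(j:ℚ)+1) = 2*(j:ℚ)+1 := by
      intro j
      rw [hB_def, ap_mul, hWodd (ga - bp) j j (by rw [hga, hbp]; ring), ap_Tr]
    have hAB : A * B = W l hl0 hl2 ga := by
      calc A * B = W l hl0 hl2 bp * ((Tr (-1) * Tr 1) * W l hl0 hl2 (ga - bp)) := by
            rw [hA_def, hB_def]; group
        _ = W l hl0 hl2 bp * W l hl0 hl2 (ga - bp) := by
            rw [Tr_mul, show ((1:ℚ) + -1) = (0:ℚ) by ring, Tr_zero, one_mul]
        _ = W l hl0 hl2 ga := by rw [W_mul, show (ga - bp + bp) = ga by ring]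
    have harg : (q:ℚ) * ga = 2 * (((q:ℤ) - 1 : ℤ):ℚ) := by
      rw [hga]
      push_cast
      linear_combination (-2 : ℚ) * hql
    have hscal : 2 * ((((q:ℤ) - 1 : ℤ)):ℚ) = (m:ℚ) - 2 := by
      rw [hmQ]; push_cast; ring
    have hDelta : altP A B m = Tr ((m:ℚ) - 2) := by
      rw [hq, show q + q = 2*q by ring, altP_even, hAB, W_pow, harg, W_even, hscal]
      congr 1
      rw [hq]; push_cast; ring
    refine ⟨A, B, hA, hB, hDelta, ?_⟩
    have hBA : B * A = Tr 1 * W l hl0 hl2 ga * (Tr 1)⁻¹ := by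
      rw [Tr_inv]
      calc B * A = Tr 1 * (W l hl0 hl2 (ga - bp) * W l hl0 hl2 bp) * Tr (-1) := by
            rw [hA_def, hB_def]; group
        _ = Tr 1 * W l hl0 hl2 ga * Tr (-1) := by
            rw [W_mul, show (bp + (ga - bp)) = ga by ring]
    rw [hq, show q + q = 2*q by ring, altP_even, hBA, conj_pow, W_pow, harg, W_even, hscal,
      Tr_inv]
    rw [mul_assoc, Tr_mul, Tr_mul]
    rw [show (-1 + ((m:ℚ) - 2)) + 1 = (m:ℚ) - 2 by ring]
    congr 1
    rw [hq]; push_cast; ring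
  · -- odd case, m = 2r+1
    obtain ⟨r, hr⟩ := ho
    have hr1 : 1 ≤ r := by omega
    have hmQ : (m:ℚ) = 2*(r:ℚ)+1 := by rw [hr]; push_cast; ring
    set al : ℚ := (m:ℚ) - 2 with hal
    set be : ℚ := al + al / m with hbe
    have hlbe : l + be = 2*(r:ℚ) := by
      rw [hl_def, hbe, hal, hmQ]
      field_simp
      ring
    set A : MonoPerm := W l hl0 hl2 be * Tr (-al) with hA_def
    set B : MonoPerm := Tr al * W l hl0 hl2 be * Tr (-(2*al)) with hB_def
    have halint : al = (((m:ℤ) - 2 : ℤ) : ℚ) := by rw [hal]; push_cast; ring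
    have hcW : Tr (-(2*al)) * W l hl0 hl2 be = W l hl0 hl2 be * Tr (-(2*al)) := by
      have h := commute_Tr_W l hl0 hl2 (-((m:ℤ)-2)) be
      have harg : 2*((-((m:ℤ)-2) : ℤ):ℚ) = -(2*al) := by
        rw [halint]; push_cast; ring
      rw [harg] at h
      exact h
    have hWodd : ∀ (i k : ℤ), (2*(i:ℚ) + l + be = 2*(k:ℚ)) →
        ap (W l hl0 hl2 be) (2*(i:ℚ)+1) = 2*(k:ℚ) := by
      intro i k hk
      show ap ((PhiP l hl0 hl2)⁻¹ * Tr be * PhiP l hl0 hl2) _ = _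
      rw [ap_mul, ap_mul, ap_PhiP, ap_Tr, phiFun_odd l hl0 hl2 i, hk]
      exact ap_PhiP_inv l hl0 hl2 (phiFun_even l hl0 hl2 k)
    have hA : ∀ j : ℤ, ap A (2*(j:ℚ)) = 2*(j:ℚ) := by
      intro j
      rw [hA_def, ap_mul, ap_Tr]
      have h1 : 2*(j:ℚ) + -al = 2*((j-r : ℤ):ℚ) + 1 := by
        rw [hal, hmQ]; push_cast; ring
      rw [h1, hWodd (j-r) j (by push_cast; linear_combination hlbe)]
    have hB : ∀ j : ℤ, ap B (2*(j:ℚ)+1) = 2*(j:ℚ)+1 := by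
      intro j
      have h1 : ap (Tr (-(2*al))) (2*(j:ℚ)+1) = 2*((j-2*r+1 : ℤ):ℚ) + 1 := by
        rw [ap_Tr, hal, hmQ]; push_cast; ring
      rw [hB_def, ap_mul, ap_mul, h1,
        hWodd (j-2*r+1) (j-r+1) (by push_cast; linear_combination hlbe), ap_Tr]
      rw [hal, hmQ]; push_cast; ring
    have hAB : A * B = W l hl0 hl2 (2*be) * Tr (-(2*al)) := by
      calc A * B
          = W l hl0 hl2 be * ((Tr (-al) * Tr al) * W l hl0 hl2 be * Tr (-(2*al))) := by
            rw [hA_def, hB_def]; group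
        _ = W l hl0 hl2 be * (W l hl0 hl2 be * Tr (-(2*al))) := by
            rw [Tr_mul, show (al + -al) = (0:ℚ) by ring, Tr_zero, one_mul]
        _ = W l hl0 hl2 (2*be) * Tr (-(2*al)) := by
            rw [← mul_assoc, W_mul, show (be + be) = 2*be by ring]
    obtain ⟨t, ht⟩ : ∃ t : ℤ, ((m:ℤ)-2)*((m:ℤ)+1) = 2*t :=
      ⟨(2*(r:ℤ)-1)*((r:ℤ)+1), by rw [hr]; push_cast; ring⟩
    have htQ : ((m:ℚ)-2)*((m:ℚ)+1) = 2*((t:ℤ):ℚ) := by exact_mod_cast congrArg (Int.cast : ℤ → ℚ) ht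
    have hexp : (m:ℚ) * be = ((m:ℚ)-2)*((m:ℚ)+1) := by
      rw [hbe, hal]; field_simp
    have hjm : (2*(r:ℚ)+1) * be = 2*((t:ℤ):ℚ) := by
      rw [show (2*(r:ℚ)+1) = (m:ℚ) from hmQ.symm, hexp, htQ]
    have hcore := core_chain l hl0 hl2 r al be ((m:ℤ)-2) halint t hjm
    have hval : (2*(r:ℚ)+1) * be - (2*(r:ℚ)+1) * al = (m:ℚ) - 2 := by
      rw [show (2*(r:ℚ)+1) = (m:ℚ) from hmQ.symm, hexp, hal]
      ring
    have hDelta : altP A B m = Tr ((m:ℚ) - 2) := by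
      rw [hr, altP_odd, hAB, hA_def, hcore, hval]
      congr 1
      rw [hr]
    refine ⟨A, B, hA, hB, hDelta, ?_⟩
    have hBc : Tr al * A * (Tr al)⁻¹ = B := by
      rw [Tr_inv, hA_def, hB_def]
      rw [mul_assoc (Tr al), mul_assoc (W l hl0 hl2 be), Tr_mul,
        show (-al + -al) = -(2*al) by ring, ← mul_assoc]
    set A'' : MonoPerm := (Tr al)⁻¹ * A * Tr al with hA''_def
    have hAc : Tr al * A'' * (Tr al)⁻¹ = A := by
      rw [hA''_def]
      group
    have hstep : altP B A m = Tr al * altP A A'' m * (Tr al)⁻¹ := by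
      conv_lhs => rw [← hAc, ← hBc]
      rw [altP_conj]
    have hAA'' : A * A'' = W l hl0 hl2 (2*be) * Tr (-(2*al)) := by
      have e1 : Tr (-al) * (Tr (-al) * (W l hl0 hl2 be * Tr (-al)) * Tr al)
          = Tr (-(2*al)) * W l hl0 hl2 be := by
        calc Tr (-al) * (Tr (-al) * (W l hl0 hl2 be * Tr (-al)) * Tr al)
            = (Tr (-al) * Tr (-al)) * W l hl0 hl2 be * (Tr (-al) * Tr al) := by group
          _ = Tr (-(2*al)) * W l hl0 hl2 be * Tr 0 := by
              rw [Tr_mul, Tr_mul, show (-al + -al) = -(2*al) by ring,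
                show (al + -al) = (0:ℚ) by ring]
          _ = Tr (-(2*al)) * W l hl0 hl2 be := by rw [Tr_zero, mul_one]
      calc A * A''
          = W l hl0 hl2 be * (Tr (-al) * (Tr (-al) * (W l hl0 hl2 be * Tr (-al)) * Tr al)) := by
            rw [hA''_def, hA_def, Tr_inv]; group
        _ = W l hl0 hl2 be * (Tr (-(2*al)) * W l hl0 hl2 be) := by rw [e1]
        _ = W l hl0 hl2 be * (W l hl0 hl2 be * Tr (-(2*al))) := by rw [hcW]
        _ = (W l hl0 hl2 be * W l hl0 hl2 be) * Tr (-(2*al)) := by group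
        _ = W l hl0 hl2 (2*be) * Tr (-(2*al)) := by
            rw [W_mul, show (be + be) = 2*be by ring]
    have hmid : altP A A'' m = Tr ((m:ℚ) - 2) := by
      rw [hr, altP_odd, hAA'', hA_def, hcore, hval]
      congr 1
      rw [hr]
    rw [hstep, hmid, Tr_inv, mul_assoc, Tr_mul, Tr_mul,
      show (-al + ((m:ℚ)-2)) + al = (m:ℚ) - 2 by ring]

end GoodPair

section Count

lemma perm_fix_pow (g : Equiv.Perm ℚ) {p : ℚ} (hp : g p = p) : ∀ n : ℕ, (g^n) p = p := by
  intro n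
  induction n with
  | zero => simp
  | succ n ih => rw [pow_succ, Equiv.Perm.mul_apply, hp, ih]

lemma perm_fix_zpow (g : Equiv.Perm ℚ) {p : ℚ} (hp : g p = p) : ∀ k : ℤ, (g^k) p = p := by
  intro k
  cases k with
  | ofNat n => simpa using perm_fix_pow g hp n
  | negSucc n =>
      rw [zpow_negSucc]
      have h := perm_fix_pow g hp (n+1)
      exact (Equiv.symm_apply_eq _).mpr h.symm

lemma ap_zpow_fix (f : MonoPerm) {p : ℚ} (hp : ap f p = p) (k : ℤ) : ap (f^k) p = p := by
  have : ((f^k : MonoPerm) : Equiv.Perm ℚ) = (f : Equiv.Perm ℚ)^k := by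
    push_cast
    ring
  show ((f^k : MonoPerm) : Equiv.Perm ℚ) p = p
  rw [this]
  exact perm_fix_zpow _ hp k

/-- The key counting bound: a product of `k` syllables moves any integer
at most `k` to the right. -/
lemma count_bound (A B : MonoPerm)
    (hA : ∀ j : ℤ, ap A (2*(j:ℚ)) = 2*(j:ℚ))
    (hB : ∀ j : ℤ, ap B (2*(j:ℚ)+1) = 2*(j:ℚ)+1) :
    ∀ L : List MonoPerm,
      (∀ s ∈ L, (∃ k : ℤ, s = A ^ k) ∨ (∃ k : ℤ, s = B ^ k)) →
      ∀ u : ℤ, ap L.prod (u:ℚ) ≤ (u:ℚ) + L.length := by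
  have hAfix : ∀ (k : ℤ) (j : ℤ), ap (A^k) (2*(j:ℚ)) = 2*(j:ℚ) :=
    fun k j => ap_zpow_fix A (hA j) k
  have hBfix : ∀ (k : ℤ) (j : ℤ), ap (B^k) (2*(j:ℚ)+1) = 2*(j:ℚ)+1 :=
    fun k j => ap_zpow_fix B (hB j) k
  intro L
  induction L using List.reverseRecOn with
  | nil =>
      intro _ u
      simp
  | append_singleton M s ih =>
      intro hmem u
      have hmemM : ∀ x ∈ M, (∃ k : ℤ, x = A ^ k) ∨ (∃ k : ℤ, x = B ^ k) :=
        fun x hx => hmem x (by simp [hx])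
      have hs := hmem s (by simp)
      rw [List.prod_append, List.prod_singleton, ap_mul]
      obtain ⟨v, hv1, hv2⟩ : ∃ v : ℤ, ap s (u:ℚ) ≤ (v:ℚ) ∧ (v:ℚ) ≤ (u:ℚ) + 1 := by
        rcases hs with ⟨k, rfl⟩ | ⟨k, rfl⟩
        · rcases Int.even_or_odd u with ⟨j, hj⟩ | ⟨j, hj⟩
          · refine ⟨u, le_of_eq ?_, by linarith⟩
            have hu : (u:ℚ) = 2*(j:ℚ) := by rw [hj]; push_cast; ring
            rw [hu, hAfix]
          · refine ⟨u+1, ?_, by push_cast; linarith⟩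
            have hu1 : ((u+1 : ℤ):ℚ) = 2*((j+1:ℤ):ℚ) := by rw [hj]; push_cast; ring
            have : ap (A^k) ((u+1:ℤ):ℚ) = ((u+1:ℤ):ℚ) := by rw [hu1, hAfix]
            calc ap (A^k) (u:ℚ) ≤ ap (A^k) ((u+1:ℤ):ℚ) := by
                  apply ap_mono
                  push_cast
                  linarith
              _ = ((u+1:ℤ):ℚ) := this
        · rcases Int.even_or_odd u with ⟨j, hj⟩ | ⟨j, hj⟩
          · refine ⟨u+1, ?_, by push_cast; linarith⟩
            have hu1 : ((u+1 : ℤ):ℚ) = 2*(j:ℚ)+1 := by rw [hj]; push_cast; ring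
            have : ap (B^k) ((u+1:ℤ):ℚ) = ((u+1:ℤ):ℚ) := by rw [hu1, hBfix]
            calc ap (B^k) (u:ℚ) ≤ ap (B^k) ((u+1:ℤ):ℚ) := by
                  apply ap_mono
                  push_cast
                  linarith
              _ = ((u+1:ℤ):ℚ) := this
          · refine ⟨u, le_of_eq ?_, by linarith⟩
            have hu : (u:ℚ) = 2*(j:ℚ)+1 := by rw [hj]; push_cast; ring
            rw [hu, hBfix]
      calc ap M.prod (ap s (u:ℚ))
          ≤ ap M.prod (v:ℚ) := ap_mono _ hv1
        _ ≤ (v:ℚ) + M.length := ih hmemM v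
        _ ≤ (u:ℚ) + (M ++ [s]).length := by
            simp only [List.length_append, List.length_singleton]
            push_cast
            linarith

lemma Tr_pow_ap (c : ℚ) (k : ℕ) : ap ((Tr c)^k) 0 = k * c := by
  rw [Tr_pow, ap_Tr]
  ring

end Count

end Stmt11Aux



namespace Stmt11Aux

lemma listAlt {G : Type*} [Monoid G] (a b : G) (n : ℕ) :
    ((List.range n).map (fun i => if i % 2 = 0 then a else b)).prod = altP a b n := by
  induction n with
  | zero => simp [altP]
  | succ n ih =>
      rw [List.range_succ, List.map_append, List.prod_append]
      simp only [List.map_singleton, List.prod_singleton]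
      rw [ih]
      rfl

lemma lift_altWord {G : Type*} [Group G] (f : Bool → G) (x : Bool) (m : ℕ) :
    FreeGroup.lift f (altWord x m) = altP (f x) (f !x) m := by
  unfold altWord
  rw [map_list_prod, List.map_map]
  have h : (FreeGroup.lift f) ∘ (fun i => FreeGroup.of (if i % 2 = 0 then x else !x))
      = fun i => if i % 2 = 0 then f x else f !x := by
    funext i
    by_cases hi : i % 2 = 0 <;> simp [hi]
  rw [h, listAlt]

/-- Every element of the dihedral Artin group is a product of syllables. -/
lemma exists_syllables (m : ℕ) (g : DihedralArtin m) :
    ∃ L : List (DihedralArtin m),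
      (∀ x ∈ L, (∃ k : ℤ, x = PresentedGroup.of true ^ k) ∨
        (∃ k : ℤ, x = PresentedGroup.of false ^ k)) ∧ L.prod = g := by
  obtain ⟨w, rfl⟩ := PresentedGroup.mk_surjective (artinRels m) g
  induction w using FreeGroup.induction_on with
  | C1 =>
      exact ⟨[], by simp, by simp⟩
  | of x =>
      refine ⟨[PresentedGroup.of x], ?_, ?_⟩
      · intro y hy
        simp only [List.mem_singleton] at hy
        subst hy
        cases x
        · right; exact ⟨1, (zpow_one _).symm⟩
        · left; exact ⟨1, (zpow_one _).symm⟩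
      · simp
        rfl
  | inv_of x _ =>
      refine ⟨[(PresentedGroup.of x)⁻¹], ?_, ?_⟩
      · intro y hy
        simp only [List.mem_singleton] at hy
        subst hy
        cases x
        · right; exact ⟨-1, by simp⟩
        · left; exact ⟨-1, by simp⟩
      · simp only [List.prod_singleton, map_inv]
        rfl
  | mul x y ihx ihy =>
      obtain ⟨Lx, hx1, hx2⟩ := ihx
      obtain ⟨Ly, hy1, hy2⟩ := ihy
      refine ⟨Lx ++ Ly, ?_, ?_⟩
      · intro z hz
        rcases List.mem_append.mp hz with h | h
        · exact hx1 z h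
        · exact hy1 z h
      · rw [List.prod_append, hx2, hy2, map_mul]

lemma syllables_inv (m : ℕ) (L : List (DihedralArtin m))
    (h : ∀ x ∈ L, (∃ k : ℤ, x = PresentedGroup.of true ^ k) ∨
      (∃ k : ℤ, x = PresentedGroup.of false ^ k)) :
    ∀ x ∈ (L.map (fun y => y⁻¹)).reverse,
      (∃ k : ℤ, x = PresentedGroup.of true ^ k) ∨
        (∃ k : ℤ, x = PresentedGroup.of false ^ k) := by
  intro x hx
  rw [List.mem_reverse, List.mem_map] at hx
  obtain ⟨y, hy, rfl⟩ := hx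
  rcases h y hy with ⟨k, rfl⟩ | ⟨k, rfl⟩
  · left; exact ⟨-k, by simp⟩
  · right; exact ⟨-k, by simp⟩

end Stmt11Aux

open Stmt11Aux in
/-- in the dihedral Artin group with coefficient `m ≥ 3`,
`ℓ_S(Δ^n) ≥ (m − 2)·|n|` for every integer `n`. -/
theorem stmt11 (m : ℕ) (hm : 3 ≤ m) (n : ℤ) :
    (m - 2) * n.natAbs ≤
      sylLen (PresentedGroup.of true) (PresentedGroup.of false) (garside m ^ n) := by
  obtain ⟨A, B, hA, hB, hD1, hD2⟩ := exists_good m hm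
  set f : Bool → MonoPerm := fun x => if x then A else B with hf
  have hrel : ∀ r ∈ artinRels m, FreeGroup.lift f r = 1 := by
    intro rr hrr
    rw [artinRels, Set.mem_singleton_iff] at hrr
    subst hrr
    rw [map_mul, map_inv, lift_altWord, lift_altWord]
    have hft : f true = A := rfl
    have hff : f false = B := rfl
    simp only [Bool.not_true, Bool.not_false, hft, hff]
    rw [hD1, hD2]
    group
  set ρ : DihedralArtin m →* MonoPerm := PresentedGroup.toGroup hrel with hρ
  have hmk : ∀ w : FreeGroup Bool, ρ (PresentedGroup.mk (artinRels m) w) = FreeGroup.lift f w :=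
    fun w => rfl
  have hgar : ρ (garside m) = Tr ((m:ℚ) - 2) := by
    rw [garside, hmk, lift_altWord]
    have hft : f true = A := rfl
    have hff : f false = B := rfl
    simp only [Bool.not_true, hft, hff]
    exact hD1
  have hof_t : ρ (PresentedGroup.of true) = A := PresentedGroup.toGroup.of hrel
  have hof_f : ρ (PresentedGroup.of false) = B := PresentedGroup.toGroup.of hrel
  by_cases hn0 : n = 0
  · subst hn0
    simp
  set n' : ℕ := n.natAbs with hn'
  apply le_csInf
  · obtain ⟨L, h1, h2⟩ := exists_syllables m (garside m ^ n)
    exact ⟨L.length, L, rfl, h1, h2⟩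
  · rintro k ⟨L, hlen, hsyl, hprod⟩
    -- reduce to nonnegative exponent
    obtain ⟨L2, hlen2, hsyl2, hprod2⟩ :
        ∃ L2 : List (DihedralArtin m), L2.length = k ∧
          (∀ x ∈ L2, (∃ j : ℤ, x = PresentedGroup.of true ^ j) ∨
            (∃ j : ℤ, x = PresentedGroup.of false ^ j)) ∧
          L2.prod = garside m ^ (n' : ℕ) := by
      rcases le_or_gt 0 n with hpos | hneg
      · refine ⟨L, hlen, hsyl, ?_⟩
        rw [hprod, ← zpow_natCast (garside m) n']
        congr 1
        omega
      · refine ⟨(L.map (fun y => y⁻¹)).reverse, ?_, syllables_inv m L hsyl, ?_⟩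
        · rw [List.length_reverse, List.length_map, hlen]
        · rw [← List.prod_inv_reverse, hprod, ← zpow_neg, ← zpow_natCast (garside m) n']
          congr 1
          omega
    -- push through ρ and evaluate at 0
    have hM := count_bound A B hA hB (L2.map ρ)
      (by
        intro s hs
        rw [List.mem_map] at hs
        obtain ⟨y, hy, rfl⟩ := hs
        rcases hsyl2 y hy with ⟨j, rfl⟩ | ⟨j, rfl⟩
        · left; exact ⟨j, by rw [map_zpow, hof_t]⟩
        · right; exact ⟨j, by rw [map_zpow, hof_f]⟩) 0
    have hval : ap ((L2.map ρ).prod) ((0:ℤ):ℚ) = (n' : ℚ) * ((m:ℚ) - 2) := by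
      rw [← map_list_prod ρ L2, hprod2, map_pow, hgar]
      show ap ((Tr ((m:ℚ)-2))^n') 0 = _
      exact Tr_pow_ap _ _
    rw [hval] at hM
    have hlen3 : ((L2.map ρ).length : ℚ) = (k : ℚ) := by
      rw [List.length_map, hlen2]
    rw [hlen3] at hM
    have hcast : (((m - 2) * n' : ℕ) : ℚ) = (n' : ℚ) * ((m:ℚ) - 2) := by
      have h2m : 2 ≤ m := by omega
      push_cast [Nat.cast_sub h2m]
      ring
    have : (((m - 2) * n' : ℕ) : ℚ) ≤ (k : ℚ) := by
      rw [hcast]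
      simpa using hM
    exact_mod_cast this
end
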